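/- arXiv:1605.04560 — 2 statements merged into one kernel-verified Lean document; each statement's English description precedes it below -/
import Mathlib

section
/- Let U be an open subset of ℝ², χ : U → ℝ² a continuously differentiable vector field with ‖χ(y)‖ = 1 for all y ∈ U, and x : [0, σ] → U a differentiable curve with x'(s) = χ(x(s)) for all s. For each s let T(s) be the linear map of ℝ² whose matrix has columns χ(x(s)) and R χ(x(s)), and let A(s) := Dχ(x(s)). Then T(s)ᵀ A(s) T(s) − T(s)ᵀ T'(s) equals the upper-triangular matrix [[0, κ(s)], [0, a(s)]], where κ(s) := ⟨R χ(x(s)), (Dχ(x(s))) χ(x(s))⟩ is the curvature scalar and a(s) := tr(Dχ(x(s))) = ∇·χ(x(s)) is the divergence of χ along the curve. -/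
open Matrix
open scoped RealInnerProductSpace

attribute [local instance] Matrix.normedAddCommGroup Matrix.normedSpace

/-- Rotation of the Euclidean plane by `π/2`: `R(a, b) = (−b, a)`. -/
noncomputable def rot : EuclideanSpace ℝ (Fin 2) →ₗ[ℝ] EuclideanSpace ℝ (Fin 2) where
  toFun v := WithLp.toLp 2 ![-(v 1), v 0]
  map_add' x y := by ext i; fin_cases i <;> simp [PiLp.add_apply] <;> ring
  map_smul' c x := by ext i; fin_cases i <;> simp [PiLp.smul_apply] <;> ring

/-- Let `U ⊆ ℝ²` be open, `χ : U → ℝ²` a continuously differentiable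
vector field with `‖χ(y)‖ = 1` for all `y ∈ U`, and `x : [0, σ] → U` a differentiable
curve with `x'(s) = χ(x(s))` for all `s`.  For each `s` let `T(s)` be the linear map of
`ℝ²` whose matrix has columns `χ(x(s))` and `R χ(x(s))`, and let `A(s) := Dχ(x(s))`.
Then `T(s)ᵀ A(s) T(s) − T(s)ᵀ T'(s)` equals the upper-triangular matrix
`[[0, κ(s)], [0, a(s)]]`, where `κ(s) := ⟨R χ(x(s)), (Dχ(x(s))) χ(x(s))⟩` is the curvature
scalar and `a(s) := tr(Dχ(x(s))) = ∇·χ(x(s))` is the divergence of `χ` along the curve. -/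
theorem moving_frame_coefficient_matrix
    (σ : ℝ) (hσ : 0 < σ)
    (U : Set (EuclideanSpace ℝ (Fin 2))) (hU : IsOpen U)
    (χ : EuclideanSpace ℝ (Fin 2) → EuclideanSpace ℝ (Fin 2))
    (hχ : ContDiffOn ℝ 1 χ U)
    (hnorm : ∀ y ∈ U, ‖χ y‖ = 1)
    (x : ℝ → EuclideanSpace ℝ (Fin 2))
    (hxU : ∀ s ∈ Set.Icc (0 : ℝ) σ, x s ∈ U)
    (hx : ∀ s ∈ Set.Icc (0 : ℝ) σ, HasDerivAt x (χ (x s)) s)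
    (T T' : ℝ → Matrix (Fin 2) (Fin 2) ℝ)
    (hTdef : ∀ s, T s = Matrix.of fun i j => if j = 0 then χ (x s) i else rot (χ (x s)) i)
    (hT : ∀ s ∈ Set.Icc (0 : ℝ) σ, HasDerivAt T (T' s) s)
    (A : ℝ → Matrix (Fin 2) (Fin 2) ℝ)
    (hA : ∀ s, A s = LinearMap.toMatrix
      (EuclideanSpace.basisFun (Fin 2) ℝ).toBasis (EuclideanSpace.basisFun (Fin 2) ℝ).toBasis
      (fderiv ℝ χ (x s) : EuclideanSpace ℝ (Fin 2) →ₗ[ℝ] EuclideanSpace ℝ (Fin 2))) :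
    ∀ s ∈ Set.Icc (0 : ℝ) σ,
      (T s)ᵀ * A s * T s - (T s)ᵀ * T' s =
        !![0, ⟪rot (χ (x s)), fderiv ℝ χ (x s) (χ (x s))⟫; 0, (A s).trace] := by
  intro s hs
  set p := x s with hp
  have hpU : p ∈ U := hxU s hs
  have hd : DifferentiableAt ℝ χ p :=
    (hχ.differentiableOn one_ne_zero).differentiableAt (hU.mem_nhds hpU)
  set f := fderiv ℝ χ p with hfdef
  -- orthogonality from constant norm
  have horth : ∀ v, ⟪χ p, f v⟫ = 0 := by
    intro v
    have hev : (fun y => (⟪χ y, χ y⟫ : ℝ)) =ᶠ[nhds p] fun _ => (1:ℝ) := by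
      filter_upwards [hU.mem_nhds hpU] with y hy
      rw [real_inner_self_eq_norm_mul_norm, hnorm y hy]; norm_num
    have h0 : fderiv ℝ (fun y => (⟪χ y, χ y⟫ : ℝ)) p = 0 := by
      rw [hev.fderiv_eq]; simp
    have := fderiv_inner_apply ℝ hd hd v
    rw [h0] at this
    simp only [ContinuousLinearMap.zero_apply] at this
    have hcomm : (⟪f v, χ p⟫ : ℝ) = ⟪χ p, f v⟫ := real_inner_comm _ _
    rw [hcomm] at this
    linarith
  -- derivative of s ↦ χ (x s)
  have hc : HasDerivAt (fun s => χ (x s)) (f (χ p)) s :=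
    hd.hasFDerivAt.comp_hasDerivAt s (hx s hs)
  have hci : ∀ i, HasDerivAt (fun s => χ (x s) i) (f (χ p) i) s := by
    intro i
    have := (EuclideanSpace.proj i (𝕜 := ℝ)).hasFDerivAt.comp_hasDerivAt s hc
    exact this
  -- T as a linear combination of constant matrices
  have hTcomb : T = fun s =>
      (χ (x s) 0) • (!![1,0;0,1] : Matrix (Fin 2) (Fin 2) ℝ)
      + (χ (x s) 1) • (!![0,-1;1,0] : Matrix (Fin 2) (Fin 2) ℝ) := by
    funext s'
    rw [hTdef s']
    ext i j
    fin_cases i <;> fin_cases j <;>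
      simp [rot, Matrix.smul_apply]
  set w0 := f (χ p) 0 with hw0def
  set w1 := f (χ p) 1 with hw1def
  have hTD : HasDerivAt T
      (w0 • (!![1,0;0,1] : Matrix (Fin 2) (Fin 2) ℝ)
       + w1 • (!![0,-1;1,0] : Matrix (Fin 2) (Fin 2) ℝ)) s := by
    rw [hTcomb]
    exact ((hci 0).smul_const _).add ((hci 1).smul_const _)
  have hT' : T' s = w0 • (!![1,0;0,1] : Matrix (Fin 2) (Fin 2) ℝ)
       + w1 • (!![0,-1;1,0] : Matrix (Fin 2) (Fin 2) ℝ) :=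
    (hT s hs).unique hTD
  -- entries of A
  have hAe : ∀ i j, A s i j = f (EuclideanSpace.single j 1) i := by
    intro i j
    rw [hA]
    simp [LinearMap.toMatrix_apply, EuclideanSpace.basisFun_apply]
    rfl
  -- decomposition of vectors
  have hdec : (χ p : EuclideanSpace ℝ (Fin 2))
      = (χ p 0) • EuclideanSpace.single 0 1 + (χ p 1) • EuclideanSpace.single 1 1 := by
    ext i
    fin_cases i <;> simp [EuclideanSpace.single_apply]
  set a := χ p 0 with hadef
  set b := χ p 1 with hbdef
  have hw : ∀ i, f (χ p) i = a * f (EuclideanSpace.single 0 1) i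
      + b * f (EuclideanSpace.single 1 1) i := by
    intro i
    conv_lhs => rw [hdec]
    simp [map_add, _root_.map_smul]
  have h1 : a * a + b * b = 1 := by
    have : (⟪χ p, χ p⟫ : ℝ) = 1 := by
      rw [real_inner_self_eq_norm_mul_norm, hnorm p hpU]; norm_num
    rw [PiLp.inner_apply] at this
    simp [Fin.sum_univ_two, RCLike.inner_apply] at this
    rw [← hadef, ← hbdef] at this
    linear_combination this
  have h2 : a * f (EuclideanSpace.single 0 1) 0 + b * f (EuclideanSpace.single 0 1) 1 = 0 := by
    have := horth (EuclideanSpace.single 0 1)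
    simp [PiLp.inner_apply, Fin.sum_univ_two, RCLike.inner_apply] at this
    rw [← hadef, ← hbdef] at this
    linear_combination this
  have h3 : a * f (EuclideanSpace.single 1 1) 0 + b * f (EuclideanSpace.single 1 1) 1 = 0 := by
    have := horth (EuclideanSpace.single 1 1)
    simp [PiLp.inner_apply, Fin.sum_univ_two, RCLike.inner_apply] at this
    rw [← hadef, ← hbdef] at this
    linear_combination this
  set M00 := f (EuclideanSpace.single 0 1) 0 with hM00
  set M10 := f (EuclideanSpace.single 0 1) 1 with hM10
  set M01 := f (EuclideanSpace.single 1 1) 0 with hM01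
  set M11 := f (EuclideanSpace.single 1 1) 1 with hM11
  have hTmat : T s = !![a, -b; b, a] := by
    rw [hTdef s]; ext i j; fin_cases i <;> fin_cases j <;> simp [rot, ← hp, ← hadef, ← hbdef]
  have hT'mat : T' s = !![w0, -w1; w1, w0] := by
    rw [hT']; ext i j; fin_cases i <;> fin_cases j <;> simp
  have hAmat : A s = !![M00, M01; M10, M11] := by
    ext i j; fin_cases i <;> fin_cases j <;> simp [hAe, hM00, hM10, hM01, hM11]
  have hww0 : w0 = a * M00 + b * M01 := by rw [hw0def, hw 0]
  have hww1 : w1 = a * M10 + b * M11 := by rw [hw1def, hw 1]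
  have hκ : (⟪rot (χ (x s)), fderiv ℝ χ (x s) (χ (x s))⟫ : ℝ) = (-b) * w0 + a * w1 := by
    simp [PiLp.inner_apply, Fin.sum_univ_two, RCLike.inner_apply, rot, ← hp, ← hfdef,
      hw0def, hw1def, hadef, hbdef]
    ring
  rw [hκ, hTmat, hT'mat, hAmat]
  ext i j
  fin_cases i <;> fin_cases j
  all_goals
    simp [Matrix.mul_apply, Fin.sum_univ_two, Matrix.trace_fin_two, Matrix.transpose_apply,
      Matrix.vecHead, Matrix.vecTail]
  all_goals rw [hww0, hww1]
  · ring
  · linear_combination a * h3 - b * h2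
  · ring
  · linear_combination (M00 + M11) * h1 - 2*a*h2 - 2*b*h3
end

section
/- Let Q : ℝ → (2×2 real matrices) and b : ℝ → ℝ² be differentiable, with Q(t) orthogonal for every t. Let x̃₁, x̃₂ : ℝ → ℝ² be differentiable curves with x̃₁(t₀) = x̃₂(t₀) at some time t₀, and define xᵢ(t) := Q(t) x̃ᵢ(t) + b(t) for i = 1, 2. Then for every vector Δ ∈ ℝ², ⟨x₁'(t₀) − x₂'(t₀), Q(t₀)Δ⟩ = ⟨x̃₁'(t₀) − x̃₂'(t₀), Δ⟩. In other words, the pointwise material flux density φ = ⟨v₁ − v₂, Δx⟩, formed from the difference of two velocities at a common base point paired with a distance vector, is invariant under all Euclidean frame changes x = Q(t)x̃ + b(t). -/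
open Matrix

attribute [local instance] Matrix.normedAddCommGroup Matrix.normedSpace

/-- Let `Q : ℝ → (2×2 real matrices)` and `b : ℝ → ℝ²` be differentiable,
with `Q(t)` orthogonal for every `t`.  Let `x̃₁, x̃₂ : ℝ → ℝ²` be differentiable curves with
`x̃₁(t₀) = x̃₂(t₀)` at some time `t₀`, and define `xᵢ(t) := Q(t) x̃ᵢ(t) + b(t)` for
`i = 1, 2`.  Then for every vector `Δ ∈ ℝ²`,
`⟨x₁'(t₀) − x₂'(t₀), Q(t₀)Δ⟩ = ⟨x̃₁'(t₀) − x̃₂'(t₀), Δ⟩`: the pointwise material flux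
density is invariant under all Euclidean frame changes `x = Q(t)x̃ + b(t)`. -/
theorem flux_density_objectivity
    (Q Q' : ℝ → Matrix (Fin 2) (Fin 2) ℝ) (b b' : ℝ → Fin 2 → ℝ)
    (hQ : ∀ t, HasDerivAt Q (Q' t) t)
    (hb : ∀ t, HasDerivAt b (b' t) t)
    (horth : ∀ t, (Q t)ᵀ * Q t = 1)
    (xt₁ xt₂ xt₁' xt₂' : ℝ → Fin 2 → ℝ)
    (hx₁ : ∀ t, HasDerivAt xt₁ (xt₁' t) t)
    (hx₂ : ∀ t, HasDerivAt xt₂ (xt₂' t) t)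
    (t₀ : ℝ) (hbase : xt₁ t₀ = xt₂ t₀)
    (x₁ x₂ : ℝ → Fin 2 → ℝ)
    (hx₁def : ∀ t, x₁ t = (Q t).mulVec (xt₁ t) + b t)
    (hx₂def : ∀ t, x₂ t = (Q t).mulVec (xt₂ t) + b t)
    (v₁ v₂ : Fin 2 → ℝ)
    (hv₁ : HasDerivAt x₁ v₁ t₀) (hv₂ : HasDerivAt x₂ v₂ t₀) :
    ∀ Δ : Fin 2 → ℝ, (v₁ - v₂) ⬝ᵥ ((Q t₀).mulVec Δ) = (xt₁' t₀ - xt₂' t₀) ⬝ᵥ Δ := by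
  have hQij : ∀ (i j : Fin 2) t, HasDerivAt (fun t => Q t i j) (Q' t i j) t := by
    intro i j t
    exact hasDerivAt_pi.mp (hasDerivAt_pi.mp (hQ t) i) j
  have key : ∀ (x x' : ℝ → Fin 2 → ℝ), (∀ t, HasDerivAt x (x' t) t) →
      HasDerivAt (fun t => (Q t).mulVec (x t) + b t)
        (((Q' t₀).mulVec (x t₀) + (Q t₀).mulVec (x' t₀)) + b' t₀) t₀ := by
    intro x x' hx
    refine HasDerivAt.add ?_ (hb t₀)
    rw [hasDerivAt_pi]
    intro i
    have : ∀ j (t : ℝ), HasDerivAt (fun t => x t j) (x' t j) t := fun j t =>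
      hasDerivAt_pi.mp (hx t) j
    simp only [Matrix.mulVec, dotProduct, Pi.add_apply]
    simpa [Finset.sum_add_distrib] using HasDerivAt.fun_sum fun j (_ : j ∈ Finset.univ) => (hQij i j t₀).mul (this j t₀)
  have e1 : v₁ = ((Q' t₀).mulVec (xt₁ t₀) + (Q t₀).mulVec (xt₁' t₀)) + b' t₀ := by
    have h := key xt₁ xt₁' hx₁
    have : HasDerivAt x₁ (((Q' t₀).mulVec (xt₁ t₀) + (Q t₀).mulVec (xt₁' t₀)) + b' t₀) t₀ := by
      simpa only [← hx₁def] using h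
    exact hv₁.unique this
  have e2 : v₂ = ((Q' t₀).mulVec (xt₂ t₀) + (Q t₀).mulVec (xt₂' t₀)) + b' t₀ := by
    have h := key xt₂ xt₂' hx₂
    have : HasDerivAt x₂ (((Q' t₀).mulVec (xt₂ t₀) + (Q t₀).mulVec (xt₂' t₀)) + b' t₀) t₀ := by
      simpa only [← hx₂def] using h
    exact hv₂.unique this
  intro Δ
  have hdiff : v₁ - v₂ = (Q t₀).mulVec (xt₁' t₀ - xt₂' t₀) := by
    rw [e1, e2, hbase, Matrix.mulVec_sub]
    abel
  rw [hdiff, dotProduct_mulVec, ← Matrix.mulVec_transpose, Matrix.mulVec_mulVec,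
    horth, Matrix.one_mulVec]
end
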